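/- Let n ≥ 2 be an integer and let P(X) = ∏_{k=1}^n (X − (k−1/2)²)² be the real polynomial of degree 2n, with coefficients c_j (the coefficient of X^j in P). Then (−1)^j·c_j ≥ 0 for every 0 ≤ j ≤ 2n, and for every integer m with 2 ≤ m ≤ n one has −4·c_{2m−1} ≥ c_{2m}. (Equivalently, writing Π_n(x)² = Σ_{m=0}^{2n} (−1)^m a_m² x^{2m} with a_m² ≥ 0, one has 4·a_{2m−1}² ≥ a_{2m}² for 2 ≤ m ≤ n, where Π_n(x) = ∏_{k=1}^n (x² − (k−1/2)²).) -/

import Mathlib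

open Finset Polynomial

/-- `P(X) = ∏_{k=1}^n (X − (k−1/2)²)²`, so that `P(x²) = Π_n(x)²`. -/
noncomputable def PolyP (n : ℕ) : Polynomial ℝ :=
  ∏ k ∈ Finset.Icc 1 n, (Polynomial.X - Polynomial.C (((k : ℝ) - 1 / 2) ^ 2)) ^ 2

lemma coeff_X_add_C_mul (c : ℝ) (p : ℝ[X]) (j : ℕ) :
    ((X + C c) * p).coeff (j + 1) = p.coeff j + c * p.coeff (j + 1) := by
  rw [add_mul, coeff_add, coeff_X_mul, coeff_C_mul]

lemma coeff_X_add_C_mul_zero (c : ℝ) (p : ℝ[X]) :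
    ((X + C c) * p).coeff 0 = c * p.coeff 0 := by
  rw [mul_coeff_zero]
  simp

/-- Key lemma: the coefficients of `∏ (X + f k)` (with `f k > 0`) are nonnegative and
satisfy `(b+1) t_{b+1} ≤ (∑ 1/f k) t_b`. -/
lemma key (f : ℕ → ℝ) (s : Finset ℕ) :
    (∀ k ∈ s, 0 < f k) →
    (∀ j, 0 ≤ (∏ k ∈ s, (X + C (f k))).coeff j) ∧
    (∀ b : ℕ, ((b : ℝ) + 1) * (∏ k ∈ s, (X + C (f k))).coeff (b + 1) ≤
      (∑ k ∈ s, (f k)⁻¹) * (∏ k ∈ s, (X + C (f k))).coeff b) := by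
  induction s using Finset.induction_on with
  | empty =>
    intro _
    constructor
    · intro j
      rcases j with _ | j <;> simp [Polynomial.coeff_one]
    · intro b
      simp [Polynomial.coeff_one]
  | @insert a s ha ih =>
    intro hf
    obtain ⟨ih0, ih1⟩ := ih (fun k hk => hf k (mem_insert_of_mem hk))
    have hc : 0 < f a := hf a (mem_insert_self a s)
    have hS0 : 0 ≤ ∑ k ∈ s, (f k)⁻¹ :=
      Finset.sum_nonneg fun k hk => (inv_nonneg).2 (hf k (mem_insert_of_mem hk)).le
    rw [Finset.prod_insert ha, Finset.sum_insert ha]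
    set p := ∏ k ∈ s, (X + C (f k)) with hp
    set S := ∑ k ∈ s, (f k)⁻¹ with hSdef
    constructor
    · intro j
      rcases j with _ | j
      · rw [coeff_X_add_C_mul_zero]
        exact mul_nonneg hc.le (ih0 0)
      · rw [coeff_X_add_C_mul]
        exact add_nonneg (ih0 j) (mul_nonneg hc.le (ih0 (j + 1)))
    · intro b
      rcases b with _ | b
      · rw [coeff_X_add_C_mul_zero, coeff_X_add_C_mul]
        have h1 : p.coeff 1 ≤ S * p.coeff 0 := by
          have := ih1 0
          push_cast at this
          linarith
        have h2 : f a * p.coeff 1 ≤ f a * (S * p.coeff 0) :=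
          mul_le_mul_of_nonneg_left h1 hc.le
        have hinv : (f a)⁻¹ * f a = 1 := inv_mul_cancel₀ hc.ne'
        push_cast
        nlinarith [ih0 0, ih0 1]
      · rw [coeff_X_add_C_mul, coeff_X_add_C_mul]
        have h1 := ih1 b
        have h2 := ih1 (b + 1)
        push_cast at h1 h2 ⊢
        have hA : f a * (((b : ℝ) + 1 + 1) * p.coeff (b + 1 + 1)) ≤
            f a * (S * p.coeff (b + 1)) := mul_le_mul_of_nonneg_left h2 hc.le
        have hrhs : ((f a)⁻¹ + S) * (p.coeff b + f a * p.coeff (b + 1)) =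
            (f a)⁻¹ * p.coeff b + p.coeff (b + 1) + S * p.coeff b +
              S * (f a * p.coeff (b + 1)) := by
          field_simp
          ring
        have hb0 : 0 ≤ (f a)⁻¹ * p.coeff b :=
          mul_nonneg (inv_nonneg.2 hc.le) (ih0 b)
        nlinarith [ih0 (b + 1)]

lemma sum_inv_le (n : ℕ) (hn : 1 ≤ n) :
    ∑ k ∈ Finset.Icc 1 n, (((k : ℝ) - 1 / 2) ^ 2)⁻¹ ≤ 5 - 1 / (n : ℝ) := by
  induction n with
  | zero => omega
  | succ n ih =>
    rcases Nat.eq_zero_or_pos n with h0 | h1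
    · subst h0
      rw [show (0 + 1 : ℕ) = 1 from rfl, Finset.Icc_self, Finset.sum_singleton]
      rw [show ((((1 : ℕ) : ℝ) - 1 / 2) ^ 2)⁻¹ = 4 by norm_num]
      norm_num
    · rw [Finset.sum_Icc_succ_top (by omega : 1 ≤ n + 1)]
      have hih := ih h1
      have hn' : (1 : ℝ) ≤ (n : ℝ) := by exact_mod_cast h1
      have hkey : ((((n + 1 : ℕ) : ℝ) - 1 / 2) ^ 2)⁻¹ ≤
          1 / (n : ℝ) - 1 / ((n : ℝ) + 1) := by
        have h1' : 1 / (n : ℝ) - 1 / ((n : ℝ) + 1) = ((n : ℝ) * ((n : ℝ) + 1))⁻¹ := by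
          field_simp
          ring
        rw [h1']
        apply inv_anti₀
        · positivity
        · push_cast
          nlinarith
      have hcast : ((n + 1 : ℕ) : ℝ) = (n : ℝ) + 1 := by push_cast; ring
      rw [hcast]
      rw [hcast] at hkey
      linarith

lemma coeff_comp_neg_X (p : ℝ[X]) (j : ℕ) :
    (p.comp (-X)).coeff j = (-1) ^ j * p.coeff j := by
  induction p using Polynomial.induction_on' with
  | add p q hp hq => simp only [add_comp, coeff_add, hp, hq]; ring
  | monomial i a =>
    rw [monomial_comp, neg_pow]
    have hC : ((-1 : ℝ[X]) ^ i) = C ((-1 : ℝ) ^ i) := by simp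
    rw [hC, ← mul_assoc, ← C_mul, coeff_C_mul, coeff_X_pow, coeff_monomial]
    by_cases h : i = j
    · subst h; simp [mul_comm]
    · simp only [if_neg h, mul_zero, zero_mul]
      simp only [eq_comm] at h
      simp [h]

lemma polyP_eq (n : ℕ) :
    PolyP n =
      ((∏ k ∈ Finset.Icc 1 n, (X + C (((k : ℝ) - 1 / 2) ^ 2))) ^ 2).comp (-X) := by
  show (∏ k ∈ Finset.Icc 1 n, (X - C (((k : ℝ) - 1 / 2) ^ 2)) ^ 2) = _
  rw [pow_comp, Polynomial.prod_comp, ← Finset.prod_pow]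
  apply Finset.prod_congr rfl
  intro k _
  simp only [add_comp, X_comp, C_comp]
  ring

lemma conv (t : ℕ → ℝ) (ht0 : ∀ i, 0 ≤ t i)
    (ht : ∀ b, 2 ≤ b → 2 * t b ≤ 5 * t (b - 1)) (m : ℕ) (hm : 2 ≤ m) :
    ∑ a ∈ Finset.range (2 * m + 1), t a * t (2 * m - a) ≤
      4 * ∑ a ∈ Finset.range (2 * m), t a * t (2 * m - 1 - a) := by
  set g : ℕ → ℝ := fun a => t a * t (2 * m - 1 - a) with hg
  have hg0 : ∀ a, 0 ≤ g a := fun a => mul_nonneg (ht0 a) (ht0 _)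
  have hsplit : ∑ a ∈ Finset.range (2 * m + 1), t a * t (2 * m - a) =
      ∑ a ∈ Finset.Ico 0 m, t a * t (2 * m - a) +
        ∑ a ∈ Finset.Ico m (2 * m + 1), t a * t (2 * m - a) := by
    rw [Finset.range_eq_Ico, ← Finset.sum_Ico_consecutive _ (Nat.zero_le m) (by omega)]
  have hA : ∑ a ∈ Finset.Ico 0 m, t a * t (2 * m - a) ≤
      (5 / 2) * ∑ a ∈ Finset.Ico 0 m, g a := by
    rw [Finset.mul_sum]
    apply Finset.sum_le_sum
    intro a ha
    rw [Finset.mem_Ico] at ha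
    have h1 : 2 * t (2 * m - a) ≤ 5 * t (2 * m - a - 1) := ht _ (by omega)
    rw [show 2 * m - a - 1 = 2 * m - 1 - a by omega] at h1
    have := mul_le_mul_of_nonneg_left (show t (2 * m - a) ≤ 5 / 2 * t (2 * m - 1 - a) by
      linarith) (ht0 a)
    simp only [hg]
    nlinarith
  have hB : ∑ a ∈ Finset.Ico m (2 * m + 1), t a * t (2 * m - a) ≤
      (5 / 2) * ∑ a ∈ Finset.Ico m (2 * m + 1), t (a - 1) * t (2 * m - a) := by
    rw [Finset.mul_sum]
    apply Finset.sum_le_sum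
    intro a ha
    rw [Finset.mem_Ico] at ha
    have h1 : 2 * t a ≤ 5 * t (a - 1) := ht _ (by omega)
    have := mul_le_mul_of_nonneg_right (show t a ≤ 5 / 2 * t (a - 1) by linarith)
      (ht0 (2 * m - a))
    nlinarith
  have hre : ∑ a ∈ Finset.Ico m (2 * m + 1), t (a - 1) * t (2 * m - a) =
      ∑ a ∈ Finset.Ico (m - 1) (2 * m), g a := by
    rw [Finset.sum_Ico_eq_sum_range, Finset.sum_Ico_eq_sum_range]
    rw [show 2 * m + 1 - m = m + 1 by omega, show 2 * m - (m - 1) = m + 1 by omega]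
    apply Finset.sum_congr rfl
    intro i hi
    rw [Finset.mem_range] at hi
    simp only [hg]
    rw [show m + i - 1 = m - 1 + i by omega,
      show 2 * m - (m + i) = 2 * m - 1 - (m - 1 + i) by omega]
  have hbot : ∑ a ∈ Finset.Ico (m - 1) (2 * m), g a =
      g (m - 1) + ∑ a ∈ Finset.Ico m (2 * m), g a := by
    rw [Finset.sum_eq_sum_Ico_succ_bot (by omega : m - 1 < 2 * m)]
    rw [show m - 1 + 1 = m by omega]
  have hodd : ∑ a ∈ Finset.range (2 * m), g a =
      ∑ a ∈ Finset.Ico 0 m, g a + ∑ a ∈ Finset.Ico m (2 * m), g a := by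
    rw [Finset.range_eq_Ico, ← Finset.sum_Ico_consecutive _ (Nat.zero_le m) (by omega)]
  have hpair : g (m - 1) + g m ≤ ∑ a ∈ Finset.range (2 * m), g a := by
    rw [← Finset.sum_pair (show m - 1 ≠ m by omega)]
    apply Finset.sum_le_sum_of_subset_of_nonneg
    · intro x hx
      rw [Finset.mem_insert, Finset.mem_singleton] at hx
      rw [Finset.mem_range]
      omega
    · intro i _ _
      exact hg0 i
  have hgm : g (m - 1) = g m := by
    simp only [hg]
    rw [show 2 * m - 1 - (m - 1) = m by omega, show 2 * m - 1 - m = m - 1 by omega]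
    ring
  have hSodd0 : 0 ≤ ∑ a ∈ Finset.range (2 * m), g a :=
    Finset.sum_nonneg fun i _ => hg0 i
  rw [hsplit]
  rw [hre, hbot] at hB
  linarith

theorem stmt12 (n : ℕ) (hn : 2 ≤ n) :
    (∀ j ≤ 2 * n, 0 ≤ (-1 : ℝ) ^ j * (PolyP n).coeff j) ∧
      ∀ m : ℕ, 2 ≤ m → m ≤ n →
        -4 * (PolyP n).coeff (2 * m - 1) ≥ (PolyP n).coeff (2 * m) := by
  set f : ℕ → ℝ := fun k => ((k : ℝ) - 1 / 2) ^ 2 with hfdef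
  have hf : ∀ k ∈ Finset.Icc 1 n, 0 < f k := by
    intro k hk
    rw [Finset.mem_Icc] at hk
    have : (1 : ℝ) ≤ (k : ℝ) := by exact_mod_cast hk.1
    have : (0 : ℝ) < (k : ℝ) - 1 / 2 := by linarith
    positivity
  obtain ⟨h0, h1⟩ := key f (Finset.Icc 1 n) hf
  set T := ∏ k ∈ Finset.Icc 1 n, (X + C (f k)) with hT
  -- sum bound
  have hS5 : ∑ k ∈ Finset.Icc 1 n, (f k)⁻¹ ≤ 5 := by
    have := sum_inv_le n (by omega)
    have hn0 : (0 : ℝ) < (n : ℝ) := by positivity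
    have : (0 : ℝ) ≤ 1 / (n : ℝ) := by positivity
    simp only [hfdef]
    linarith [sum_inv_le n (by omega : 1 ≤ n)]
  -- ratio bound
  have ht : ∀ b, 2 ≤ b → 2 * T.coeff b ≤ 5 * T.coeff (b - 1) := by
    intro b hb
    obtain ⟨b', rfl⟩ : ∃ b', b = b' + 1 := ⟨b - 1, by omega⟩
    have hb' : (1 : ℝ) ≤ (b' : ℝ) := by
      have : 1 ≤ b' := by omega
      exact_mod_cast this
    have h2 : 2 * T.coeff (b' + 1) ≤ ((b' : ℝ) + 1) * T.coeff (b' + 1) :=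
      mul_le_mul_of_nonneg_right (by linarith) (h0 (b' + 1))
    have h3 : (∑ k ∈ Finset.Icc 1 n, (f k)⁻¹) * T.coeff b' ≤ 5 * T.coeff b' :=
      mul_le_mul_of_nonneg_right hS5 (h0 b')
    have := h1 b'
    simp only [show b' + 1 - 1 = b' from rfl]
    linarith
  -- coefficient relation
  have hcoeffP : ∀ j, (PolyP n).coeff j = (-1) ^ j * (T ^ 2).coeff j := by
    intro j
    rw [polyP_eq n, coeff_comp_neg_X]
  have hmulcoeff : ∀ N, (T ^ 2).coeff N =
      ∑ a ∈ Finset.range (N + 1), T.coeff a * T.coeff (N - a) := by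
    intro N
    rw [sq, coeff_mul, Finset.Nat.sum_antidiagonal_eq_sum_range_succ_mk]
  have hsqnn : ∀ N, 0 ≤ (T ^ 2).coeff N := by
    intro N
    rw [hmulcoeff]
    exact Finset.sum_nonneg fun a _ => mul_nonneg (h0 a) (h0 _)
  constructor
  · intro j _
    rw [hcoeffP j, ← mul_assoc, ← mul_pow]
    norm_num
    exact hsqnn j
  · intro m hm2 hmn
    have hodd : Odd (2 * m - 1) := ⟨m - 1, by omega⟩
    have heven : (PolyP n).coeff (2 * m) = (T ^ 2).coeff (2 * m) := by
      rw [hcoeffP, Even.neg_one_pow (even_two_mul m), one_mul]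
    have hoddc : (PolyP n).coeff (2 * m - 1) = -((T ^ 2).coeff (2 * m - 1)) := by
      rw [hcoeffP, Odd.neg_one_pow hodd]
      ring
    rw [ge_iff_le, heven, hoddc]
    have hconv := conv T.coeff h0 ht m hm2
    rw [hmulcoeff (2 * m), hmulcoeff (2 * m - 1),
      show 2 * m - 1 + 1 = 2 * m by omega]
    linarith
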